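/- arXiv:2603.05624 — 3 statements merged into one kernel-verified Lean document; each statement's English description precedes it below -/
import Mathlib

section
/- Let E be a separable Banach space, P and P' probability measures on a measurable space (Ω,𝓕), and X : Ω → E a Borel measurable map with 𝔼_P[‖X‖²] < ∞ and 𝔼_{P'}[‖X‖²] < ∞. Then for every R > 0, 𝒲₁( P∘X^{-1}, P'∘X^{-1} ) ≤ 2R·‖P − P'‖_TV + R^{-1}·( 𝔼_P[‖X‖²] + 𝔼_{P'}[‖X‖²] ). -/
open MeasureTheory Filter Topology

noncomputable section

namespace PaperFormal

/-- `π` is a coupling of `μ` and `ν`. -/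
def IsCoupling {S : Type*} [MeasurableSpace S] (μ ν : Measure S) (π : Measure (S × S)) : Prop :=
  π.map Prod.fst = μ ∧ π.map Prod.snd = ν

/-- Optimal transport cost associated with the cost function `c`.  For `c = edist` this is
the Wasserstein-1 distance `𝒲₁`. -/
def transportCost {S : Type*} [MeasurableSpace S] (c : S → S → ENNReal)
    (μ ν : Measure S) : ENNReal :=
  ⨅ π ∈ {π : Measure (S × S) | IsCoupling μ ν π}, ∫⁻ p, c p.1 p.2 ∂π

/-- The Wasserstein-1 distance `𝒲₁` on measures on an (extended pseudo-)metric space. -/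
def W1 {S : Type*} [MeasurableSpace S] [PseudoEMetricSpace S] (μ ν : Measure S) : ENNReal :=
  transportCost (fun x y => edist x y) μ ν

/-- The set `𝒫₁`: Borel probability measures with a finite first moment, the first moment
being computed with respect to the cost function `c` and the base point `x0`. -/
def P1 {S : Type*} [MeasurableSpace S] (c : S → S → ENNReal) (x0 : S) : Set (Measure S) :=
  {μ | IsProbabilityMeasure μ ∧ ∫⁻ x, c x0 x ∂μ < ⊤}

/-- The total variation distance `‖P − Q‖_TV = sup_{A measurable} |P(A) − Q(A)|`. -/
def tvDist {Ω : Type*} [MeasurableSpace Ω] (P Q : Measure Ω) : ENNReal :=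
  ⨆ A ∈ {A : Set Ω | MeasurableSet A}, max (P A - Q A) (Q A - P A)

/-- The sum cost on a product of two metric spaces, corresponding to the norm
`‖(x,z)‖ = ‖x‖ + |z|` used in the paper. -/
def sumCost {α β : Type*} [PseudoEMetricSpace α] [PseudoEMetricSpace β] :
    (α × β) → (α × β) → ENNReal :=
  fun p q => edist p.1 q.1 + edist p.2 q.2

/-- Relative sequential compactness of a set `𝒬` of measures inside a set `target`
(typically `𝒫₁`), with respect to the transport-cost (Wasserstein) topology. -/
def RelCptW {S : Type*} [MeasurableSpace S] (c : S → S → ENNReal)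
    (target 𝒬 : Set (Measure S)) : Prop :=
  ∀ f : ℕ → Measure S, (∀ n, f n ∈ 𝒬) →
    ∃ μ ∈ target, ∃ σ : ℕ → ℕ, StrictMono σ ∧
      Tendsto (fun n => transportCost c (f (σ n)) μ) atTop (𝓝 0)

/-- Sequential compactness of a set of measures w.r.t. the transport-cost topology. -/
def CptW {S : Type*} [MeasurableSpace S] (c : S → S → ENNReal) (𝒬 : Set (Measure S)) : Prop :=
  RelCptW c 𝒬 𝒬

/-- The Dirac-type Young measure `δ_{q_t}(dq) dt` on `[0,T] × 𝒫(S)` associated with a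
measure-flow `t ↦ q_t`. -/
def diracYoung {S : Type*} [MeasurableSpace S] (T : ℝ) (q : ℝ → Measure S) :
    Measure (ℝ × Measure S) :=
  (volume.restrict (Set.Icc (0 : ℝ) T)).map (fun t => (t, q t))

/-- `ν` is an integrable Young measure on `[0,T] × 𝒫₁(S)`: its first marginal is Lebesgue
measure on `[0,T]`, it is carried by `𝒫₁(S)`, and it integrates the first-moment map. -/
def IsIntegrableYoung {S : Type*} [MeasurableSpace S] (T : ℝ) (c : S → S → ENNReal) (x0 : S)
    (ν : Measure (ℝ × Measure S)) : Prop :=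
  ν.map Prod.fst = volume.restrict (Set.Icc (0 : ℝ) T) ∧
  (∀ᵐ p ∂ν, p.2 ∈ P1 c x0) ∧
  ∫⁻ p, (∫⁻ x, c x0 x ∂p.2) ∂ν < ⊤

/-- Convergence in the stable topology `𝒮₁(𝒫₁(S))` of integrable Young measures: the
integrals against all test functions `1_A(t) φ(q)`, with `A ⊆ [0,T]` Borel and
`φ` Lipschitz w.r.t. the Wasserstein-1 distance, converge. -/
def StableTendsto {S : Type*} [MeasurableSpace S] (T : ℝ) (c : S → S → ENNReal) (x0 : S)
    (νs : ℕ → Measure (ℝ × Measure S)) (ν : Measure (ℝ × Measure S)) : Prop :=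
  ∀ A : Set ℝ, MeasurableSet A → A ⊆ Set.Icc 0 T →
    ∀ (φ : Measure S → ℝ) (L : ℝ),
      (∀ μ₁ μ₂, μ₁ ∈ P1 c x0 → μ₂ ∈ P1 c x0 →
        |φ μ₁ - φ μ₂| ≤ L * (transportCost c μ₁ μ₂).toReal) →
      Tendsto (fun n => ∫ p, A.indicator (fun _ => (1 : ℝ)) p.1 * φ p.2 ∂(νs n)) atTop
        (𝓝 (∫ p, A.indicator (fun _ => (1 : ℝ)) p.1 * φ p.2 ∂ν))

/-- Relative sequential compactness of a family of integrable Young measures in the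
stable topology `𝒮₁(𝒫₁(S))`. -/
def StableRelCpt {S : Type*} [MeasurableSpace S] (T : ℝ) (c : S → S → ENNReal) (x0 : S)
    (𝔉 : Set (Measure (ℝ × Measure S))) : Prop :=
  ∀ f : ℕ → Measure (ℝ × Measure S), (∀ n, f n ∈ 𝔉) →
    ∃ ν, IsIntegrableYoung T c x0 ν ∧
      ∃ σ : ℕ → ℕ, StrictMono σ ∧ StableTendsto T c x0 (fun n => f (σ n)) ν

end PaperFormal


open Set in
private lemma prod_map_fst_aux {α : Type*} [MeasurableSpace α] (ρ ρ' : Measure α)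
    [IsFiniteMeasure ρ] [IsFiniteMeasure ρ'] :
    (ρ.prod ρ').map Prod.fst = ρ' univ • ρ := by
  ext t ht
  rw [Measure.map_apply measurable_fst ht, Measure.smul_apply,
    show Prod.fst ⁻¹' t = t ×ˢ univ by ext p; simp, Measure.prod_prod, mul_comm]
  rfl

open Set in
private lemma prod_map_snd_aux {α : Type*} [MeasurableSpace α] (ρ ρ' : Measure α)
    [IsFiniteMeasure ρ] [IsFiniteMeasure ρ'] :
    (ρ.prod ρ').map Prod.snd = ρ univ • ρ' := by
  ext t ht
  rw [Measure.map_apply measurable_snd ht, Measure.smul_apply,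
    show Prod.snd ⁻¹' t = (univ : Set α) ×ˢ t by ext p; simp, Measure.prod_prod]
  rfl


open PaperFormal in
/-- truncation estimate inside Proposition 3.1.  For probability measures
`P, P'` and a random variable `X` with finite second moments under both, for every `R > 0`:
`𝒲₁(P∘X⁻¹, P'∘X⁻¹) ≤ 2R‖P−P'‖_TV + R⁻¹(𝔼_P[‖X‖²] + 𝔼_{P'}[‖X‖²])`. -/
theorem statement1
    {Ω : Type*} [MeasurableSpace Ω]
    {E : Type*} [NormedAddCommGroup E] [NormedSpace ℝ E] [CompleteSpace E]
    [TopologicalSpace.SeparableSpace E] [MeasurableSpace E] [BorelSpace E]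
    (P P' : Measure Ω) [IsProbabilityMeasure P] [IsProbabilityMeasure P']
    (X : Ω → E) (hX : Measurable X)
    (hP : ∫⁻ ω, (‖X ω‖₊ : ENNReal) ^ 2 ∂P < ⊤)
    (hP' : ∫⁻ ω, (‖X ω‖₊ : ENNReal) ^ 2 ∂P' < ⊤) :
    ∀ R : ℝ, 0 < R →
      W1 (P.map X) (P'.map X) ≤
        2 * ENNReal.ofReal R * tvDist P P' +
          (ENNReal.ofReal R)⁻¹ *
            (∫⁻ ω, (‖X ω‖₊ : ENNReal) ^ 2 ∂P + ∫⁻ ω, (‖X ω‖₊ : ENNReal) ^ 2 ∂P') := by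
  intro R hR
  obtain ⟨s, hs, hs1, hs2⟩ := hahn_decomposition (μ := P) (ν := P')
  set m : Measure Ω := P'.restrict s + P.restrict sᶜ with hm
  set r : Measure Ω := P.restrict s - P'.restrict s with hr
  set r' : Measure Ω := P'.restrict sᶜ - P.restrict sᶜ with hr'
  have hle1 : P'.restrict s ≤ P.restrict s := by
    rw [Measure.le_iff]; intro t ht
    rw [Measure.restrict_apply ht, Measure.restrict_apply ht]
    exact hs1 _ (ht.inter hs) Set.inter_subset_right
  have hle2 : P.restrict sᶜ ≤ P'.restrict sᶜ := by
    rw [Measure.le_iff]; intro t ht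
    rw [Measure.restrict_apply ht, Measure.restrict_apply ht]
    exact hs2 _ (ht.inter hs.compl) Set.inter_subset_right
  have hrP : r ≤ P := Measure.sub_le.trans (Measure.restrict_le_self)
  have hr'P' : r' ≤ P' := Measure.sub_le.trans (Measure.restrict_le_self)
  have hPeq : m + r = P := by
    rw [hm, hr, add_right_comm, add_comm (P'.restrict s) (P.restrict s - P'.restrict s),
      Measure.sub_add_cancel_of_le hle1, Measure.restrict_add_restrict_compl hs]
  have hP'eq : m + r' = P' := by
    rw [hm, hr', add_assoc, add_comm (P.restrict sᶜ) (P'.restrict sᶜ - P.restrict sᶜ),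
      Measure.sub_add_cancel_of_le hle2, Measure.restrict_add_restrict_compl hs]
  set d : ENNReal := P s - P' s with hd
  have hdtop : d ≠ ⊤ := by
    refine (tsub_le_self.trans (measure_mono (Set.subset_univ s))).trans_lt ?_ |>.ne
    simp [measure_univ]
  have hrux : r Set.univ = d := by
    rw [hr, Measure.sub_apply MeasurableSet.univ hle1,
      Measure.restrict_apply_univ, Measure.restrict_apply_univ]
  have hr'ux : r' Set.univ = d := by
    rw [hr', Measure.sub_apply MeasurableSet.univ hle2,
      Measure.restrict_apply_univ, Measure.restrict_apply_univ,
      measure_compl hs (measure_ne_top _ _), measure_compl hs (measure_ne_top _ _),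
      measure_univ, measure_univ]
    exact (ENNReal.cancel_of_ne (ENNReal.sub_ne_top ENNReal.one_ne_top)).tsub_tsub_tsub_cancel_left
      prob_le_one
  -- instances
  have : IsFiniteMeasure m := by rw [hm]; infer_instance
  have hrfin : IsFiniteMeasure r := ⟨by rw [hrux]; exact hdtop.lt_top⟩
  have hr'fin : IsFiniteMeasure r' := ⟨by rw [hr'ux]; exact hdtop.lt_top⟩
  -- the coupling
  set π : Measure (E × E) :=
    m.map (fun ω => (X ω, X ω)) + d⁻¹ • ((r.map X).prod (r'.map X)) with hπ
  have hsmul : ∀ ρ : Measure E, ρ Set.univ = d → (d⁻¹ * d) • ρ = ρ := by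
    intro ρ hρ
    rcases eq_or_ne d 0 with h0 | h0
    · have : ρ = 0 := Measure.measure_univ_eq_zero.mp (by rw [hρ, h0])
      simp [this]
    · rw [ENNReal.inv_mul_cancel h0 hdtop, one_smul]
  have hmapr : (r.map X) Set.univ = d := by
    rw [Measure.map_apply hX MeasurableSet.univ, Set.preimage_univ, hrux]
  have hmapr' : (r'.map X) Set.univ = d := by
    rw [Measure.map_apply hX MeasurableSet.univ, Set.preimage_univ, hr'ux]
  have hcoup : IsCoupling (P.map X) (P'.map X) π := by
    constructor
    · rw [hπ, Measure.map_add _ _ measurable_fst, Measure.map_smul,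
        Measure.map_map measurable_fst (hX.prodMk hX), prod_map_fst_aux, hmapr',
        smul_smul, hsmul _ hmapr]
      show m.map X + r.map X = P.map X
      rw [← Measure.map_add _ _ hX, hPeq]
    · rw [hπ, Measure.map_add _ _ measurable_snd, Measure.map_smul,
        Measure.map_map measurable_snd (hX.prodMk hX), prod_map_snd_aux, hmapr,
        smul_smul, hsmul _ hmapr']
      show m.map X + r'.map X = P'.map X
      rw [← Measure.map_add _ _ hX, hP'eq]
  -- cost bound
  set ρR : ENNReal := ENNReal.ofReal R with hρR
  have hρR0 : ρR ≠ 0 := by simp [hρR, hR, hR.le]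
  have hρRtop : ρR ≠ ⊤ := ENNReal.ofReal_ne_top
  have hnorm2 : Measurable fun ω => (‖X ω‖₊ : ENNReal) ^ 2 := hX.enorm.pow_const 2
  have hptwise : ∀ x : E, (‖x‖₊ : ENNReal) ≤ ρR + ρR⁻¹ * (‖x‖₊ : ENNReal) ^ 2 := by
    intro x
    rcases le_total (‖x‖₊ : ENNReal) ρR with h | h
    · exact le_add_right h
    · refine le_add_left ?_
      calc (‖x‖₊ : ENNReal) = (ρR⁻¹ * ρR) * ‖x‖₊ := by
            rw [ENNReal.inv_mul_cancel hρR0 hρRtop, one_mul]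
        _ ≤ ρR⁻¹ * (‖x‖₊ : ENNReal) ^ 2 := by
            rw [mul_assoc, sq]
            exact mul_le_mul_right (mul_le_mul_left h _) _
  have hbound : ∀ (ν : Measure Ω), ν ≤ P → ν Set.univ = d →
      ∫⁻ ω, (‖X ω‖₊ : ENNReal) ∂ν ≤ ρR * d + ρR⁻¹ * ∫⁻ ω, (‖X ω‖₊ : ENNReal) ^ 2 ∂P := by
    intro ν hνP hνu
    calc ∫⁻ ω, (‖X ω‖₊ : ENNReal) ∂ν
        ≤ ∫⁻ ω, (ρR + ρR⁻¹ * (‖X ω‖₊ : ENNReal) ^ 2) ∂ν :=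
          lintegral_mono fun ω => hptwise (X ω)
      _ = ρR * d + ρR⁻¹ * ∫⁻ ω, (‖X ω‖₊ : ENNReal) ^ 2 ∂ν := by
          rw [lintegral_add_left measurable_const, lintegral_const,
            lintegral_const_mul _ hnorm2, hνu]
      _ ≤ ρR * d + ρR⁻¹ * ∫⁻ ω, (‖X ω‖₊ : ENNReal) ^ 2 ∂P := by
          gcongr
  have hbound' : ∀ (ν : Measure Ω), ν ≤ P' → ν Set.univ = d →
      ∫⁻ ω, (‖X ω‖₊ : ENNReal) ∂ν ≤ ρR * d + ρR⁻¹ * ∫⁻ ω, (‖X ω‖₊ : ENNReal) ^ 2 ∂P' := by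
    intro ν hνP hνu
    calc ∫⁻ ω, (‖X ω‖₊ : ENNReal) ∂ν
        ≤ ∫⁻ ω, (ρR + ρR⁻¹ * (‖X ω‖₊ : ENNReal) ^ 2) ∂ν :=
          lintegral_mono fun ω => hptwise (X ω)
      _ = ρR * d + ρR⁻¹ * ∫⁻ ω, (‖X ω‖₊ : ENNReal) ^ 2 ∂ν := by
          rw [lintegral_add_left measurable_const, lintegral_const,
            lintegral_const_mul _ hnorm2, hνu]
      _ ≤ ρR * d + ρR⁻¹ * ∫⁻ ω, (‖X ω‖₊ : ENNReal) ^ 2 ∂P' := by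
          gcongr
  have hdinv : d⁻¹ * d ≤ 1 := by
    rcases eq_or_ne d 0 with h0 | h0
    · simp [h0]
    · rw [ENNReal.inv_mul_cancel h0 hdtop]
  have hcost : ∫⁻ p, edist p.1 p.2 ∂π ≤
      2 * ρR * d + ρR⁻¹ * (∫⁻ ω, (‖X ω‖₊ : ENNReal) ^ 2 ∂P + ∫⁻ ω, (‖X ω‖₊ : ENNReal) ^ 2 ∂P') := by
    rw [hπ, lintegral_add_measure, lintegral_smul_measure,
      lintegral_map measurable_edist (hX.prodMk hX)]
    simp only [edist_self, lintegral_zero, zero_add]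
    have hA : ∫⁻ p, edist p.1 p.2 ∂((r.map X).prod (r'.map X)) ≤
        d * ∫⁻ ω, (‖X ω‖₊ : ENNReal) ∂r + d * ∫⁻ ω, (‖X ω‖₊ : ENNReal) ∂r' := by
      calc ∫⁻ p, edist p.1 p.2 ∂((r.map X).prod (r'.map X))
          ≤ ∫⁻ p, ((‖p.1‖₊ : ENNReal) + (‖p.2‖₊ : ENNReal)) ∂((r.map X).prod (r'.map X)) := by
            refine lintegral_mono fun p => ?_
            rw [edist_nndist, nndist_eq_nnnorm]
            simpa [ENNReal.coe_add] using ENNReal.coe_le_coe.mpr (nnnorm_sub_le p.1 p.2)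
        _ = ∫⁻ p, (‖p.1‖₊ : ENNReal) ∂((r.map X).prod (r'.map X)) +
            ∫⁻ p, (‖p.2‖₊ : ENNReal) ∂((r.map X).prod (r'.map X)) :=
            lintegral_add_left (measurable_fst.enorm) _
        _ = d * ∫⁻ ω, (‖X ω‖₊ : ENNReal) ∂r + d * ∫⁻ ω, (‖X ω‖₊ : ENNReal) ∂r' := by
            congr 1
            · rw [← lintegral_map (f := fun x : E => (‖x‖₊ : ENNReal)) measurable_enorm measurable_fst, prod_map_fst_aux, hmapr',
                lintegral_smul_measure, lintegral_map (f := fun x : E => (‖x‖₊ : ENNReal)) measurable_enorm hX, smul_eq_mul]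
            · rw [← lintegral_map (f := fun x : E => (‖x‖₊ : ENNReal)) measurable_enorm measurable_snd, prod_map_snd_aux, hmapr,
                lintegral_smul_measure, lintegral_map (f := fun x : E => (‖x‖₊ : ENNReal)) measurable_enorm hX, smul_eq_mul]
    calc d⁻¹ * ∫⁻ p, edist p.1 p.2 ∂((r.map X).prod (r'.map X))
        ≤ d⁻¹ * (d * ∫⁻ ω, (‖X ω‖₊ : ENNReal) ∂r + d * ∫⁻ ω, (‖X ω‖₊ : ENNReal) ∂r') := by
          gcongr
      _ = (d⁻¹ * d) * ∫⁻ ω, (‖X ω‖₊ : ENNReal) ∂r +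
          (d⁻¹ * d) * ∫⁻ ω, (‖X ω‖₊ : ENNReal) ∂r' := by ring
      _ ≤ ∫⁻ ω, (‖X ω‖₊ : ENNReal) ∂r + ∫⁻ ω, (‖X ω‖₊ : ENNReal) ∂r' := by
          refine add_le_add ?_ ?_ <;>
            exact (mul_le_mul_left hdinv _).trans_eq (one_mul _) |>.trans_eq' rfl
      _ ≤ (ρR * d + ρR⁻¹ * ∫⁻ ω, (‖X ω‖₊ : ENNReal) ^ 2 ∂P) +
          (ρR * d + ρR⁻¹ * ∫⁻ ω, (‖X ω‖₊ : ENNReal) ^ 2 ∂P') :=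
          add_le_add (hbound r hrP hrux) (hbound' r' hr'P' hr'ux)
      _ = 2 * ρR * d + ρR⁻¹ * (∫⁻ ω, (‖X ω‖₊ : ENNReal) ^ 2 ∂P +
            ∫⁻ ω, (‖X ω‖₊ : ENNReal) ^ 2 ∂P') := by ring
  have hdtv : d ≤ tvDist P P' := by
    refine le_trans ?_ (le_biSup _ (show s ∈ {A : Set Ω | MeasurableSet A} from hs))
    exact le_max_left _ _
  calc W1 (P.map X) (P'.map X) ≤ ∫⁻ p, edist p.1 p.2 ∂π := iInf₂_le π hcoup
    _ ≤ 2 * ρR * d + ρR⁻¹ * (∫⁻ ω, (‖X ω‖₊ : ENNReal) ^ 2 ∂P +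
          ∫⁻ ω, (‖X ω‖₊ : ENNReal) ^ 2 ∂P') := hcost
    _ ≤ 2 * ρR * tvDist P P' + ρR⁻¹ * (∫⁻ ω, (‖X ω‖₊ : ENNReal) ^ 2 ∂P +
          ∫⁻ ω, (‖X ω‖₊ : ENNReal) ^ 2 ∂P') := by gcongr
end
end

section
/- Let E be a separable Banach space, T > 0, P and P' probability measures on (Ω,𝓕), and X : [0,T]×Ω → E a jointly measurable process with ‖X‖_{ℍ²(E;P)} < ∞ and ‖X‖_{ℍ²(E;P')} < ∞. Then ∫₀ᵀ 𝒲₁( P∘(X_t)^{-1}, P'∘(X_t)^{-1} ) dt ≤ ( 2T + ‖X‖²_{ℍ²(E;P)} + ‖X‖²_{ℍ²(E;P')} ) · ‖P − P'‖_TV^{1/2}. -/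
open MeasureTheory Filter Topology

noncomputable section

open PaperFormal in
lemma W1_le_lintegral_edist {S : Type*} [MeasurableSpace S] [PseudoEMetricSpace S]
    {μ ν : Measure S} (π : Measure (S × S)) (h : IsCoupling μ ν π) :
    W1 μ ν ≤ ∫⁻ p, edist p.1 p.2 ∂π :=
  iInf₂_le π h

lemma ennreal_le_add_inv_mul_sq (a : ENNReal) {R : ENNReal} (hR0 : R ≠ 0) (hRt : R ≠ ⊤) :
    a ≤ R + R⁻¹ * a ^ 2 := by
  rcases le_total a R with h | h
  · exact le_add_right h
  · calc a = R⁻¹ * R * a := by rw [ENNReal.inv_mul_cancel hR0 hRt, one_mul]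
      _ ≤ R⁻¹ * a * a := by gcongr
      _ = R⁻¹ * a ^ 2 := by ring
      _ ≤ R + R⁻¹ * a ^ 2 := le_add_self

lemma edist_le_enorm_add_enorm {E : Type*} [NormedAddCommGroup E] (x y : E) :
    edist x y ≤ (‖x‖₊ : ENNReal) + ‖y‖₊ := by
  calc edist x y ≤ edist x 0 + edist 0 y := edist_triangle _ _ _
    _ = (‖x‖₊ : ENNReal) + ‖y‖₊ := by rw [edist_zero_right, edist_zero_left]; rfl

open PaperFormal in
lemma pointwise_W1_bound {Ω : Type*} [MeasurableSpace Ω] {E : Type*} [NormedAddCommGroup E]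
    [MeasurableSpace E] [BorelSpace E] [SecondCountableTopology E]
    (P P' lam a b : Measure Ω) [IsFiniteMeasure a] [IsFiniteMeasure b]
    (hlama : lam + a = P) (hlamb : lam + b = P')
    (hab : b Set.univ = a Set.univ)
    (Y : Ω → E) (hY : Measurable Y) {R : ENNReal} (hR0 : R ≠ 0) (hRt : R ≠ ⊤) :
    W1 (P.map Y) (P'.map Y) ≤
      2 * (R * a Set.univ) +
        R⁻¹ * ((∫⁻ ω, (‖Y ω‖₊ : ENNReal) ^ 2 ∂a) + ∫⁻ ω, (‖Y ω‖₊ : ENNReal) ^ 2 ∂b) := by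
  have hdiag : Measurable (fun ω : Ω => (ω, ω)) := measurable_id.prodMk measurable_id
  have hdiagE : Measurable (fun x : E => (x, x)) := measurable_id.prodMk measurable_id
  have hedist : Measurable (fun p : E × E => edist p.1 p.2) := measurable_edist
  have hg : Measurable (fun p : Ω × Ω => (Y p.1, Y p.2)) :=
    (hY.comp measurable_fst).prodMk (hY.comp measurable_snd)
  have hf : Measurable fun ω : Ω => (‖Y ω‖₊ : ENNReal) := hY.nnnorm.coe_nnreal_ennreal
  set e := a Set.univ with he
  by_cases he0 : e = 0
  · have ha0 : a = 0 := Measure.measure_univ_eq_zero.mp he0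
    have hb0 : b = 0 := Measure.measure_univ_eq_zero.mp (by rw [hab]; exact he0)
    have hPP' : P' = P := by rw [← hlama, ← hlamb, ha0, hb0]
    rw [hPP']
    set m := P.map Y with hm
    have hc : IsCoupling m m (m.map fun x => (x, x)) := by
      constructor
      · rw [Measure.map_map measurable_fst hdiagE]
        exact Measure.map_id
      · rw [Measure.map_map measurable_snd hdiagE]
        exact Measure.map_id
    refine (W1_le_lintegral_edist _ hc).trans ?_
    rw [lintegral_map hedist hdiagE]
    simp
  · have het : e ≠ ⊤ := measure_ne_top a _
    set κ : Measure (Ω × Ω) := lam.map (fun ω => (ω, ω)) + e⁻¹ • a.prod b with hκ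
    set π := κ.map (fun p : Ω × Ω => (Y p.1, Y p.2)) with hπ
    have hfst : κ.map Prod.fst = P := by
      rw [hκ, Measure.map_add _ _ measurable_fst, Measure.map_map measurable_fst hdiag,
        Measure.map_smul, Measure.map_fst_prod, hab, smul_smul,
        ENNReal.inv_mul_cancel he0 het, one_smul,
        show (Prod.fst ∘ fun ω : Ω => (ω, ω)) = id from rfl, Measure.map_id]
      exact hlama
    have hsnd : κ.map Prod.snd = P' := by
      rw [hκ, Measure.map_add _ _ measurable_snd, Measure.map_map measurable_snd hdiag,
        Measure.map_smul, Measure.map_snd_prod, ← he, smul_smul,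
        ENNReal.inv_mul_cancel he0 het, one_smul,
        show (Prod.snd ∘ fun ω : Ω => (ω, ω)) = id from rfl, Measure.map_id]
      exact hlamb
    have hcpl : IsCoupling (P.map Y) (P'.map Y) π := by
      constructor
      · rw [hπ, Measure.map_map measurable_fst hg,
          show (Prod.fst ∘ fun p : Ω × Ω => (Y p.1, Y p.2)) = Y ∘ Prod.fst from rfl,
          ← Measure.map_map hY measurable_fst, hfst]
      · rw [hπ, Measure.map_map measurable_snd hg,
          show (Prod.snd ∘ fun p : Ω × Ω => (Y p.1, Y p.2)) = Y ∘ Prod.snd from rfl,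
          ← Measure.map_map hY measurable_snd, hsnd]
    refine (W1_le_lintegral_edist π hcpl).trans ?_
    rw [hπ, lintegral_map hedist hg, hκ, lintegral_add_measure, lintegral_smul_measure]
    have h1 : ∫⁻ p : Ω × Ω, edist (Y p.1) (Y p.2) ∂(lam.map fun ω => (ω, ω)) = 0 := by
      rw [lintegral_map (f := fun p : Ω × Ω => edist (Y p.1) (Y p.2)) (hedist.comp hg) hdiag]
      simp
    rw [h1, zero_add]
    have hIa : ∫⁻ ω, (‖Y ω‖₊ : ENNReal) ∂a ≤ R * e + R⁻¹ * ∫⁻ ω, (‖Y ω‖₊ : ENNReal) ^ 2 ∂a := by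
      calc ∫⁻ ω, (‖Y ω‖₊ : ENNReal) ∂a
          ≤ ∫⁻ ω, (R + R⁻¹ * (‖Y ω‖₊ : ENNReal) ^ 2) ∂a :=
            lintegral_mono fun ω => ennreal_le_add_inv_mul_sq _ hR0 hRt
        _ = R * e + R⁻¹ * ∫⁻ ω, (‖Y ω‖₊ : ENNReal) ^ 2 ∂a := by
            rw [lintegral_add_left measurable_const, lintegral_const,
              lintegral_const_mul _ (hf.pow_const 2)]
    have hIb : ∫⁻ ω, (‖Y ω‖₊ : ENNReal) ∂b ≤ R * e + R⁻¹ * ∫⁻ ω, (‖Y ω‖₊ : ENNReal) ^ 2 ∂b := by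
      calc ∫⁻ ω, (‖Y ω‖₊ : ENNReal) ∂b
          ≤ ∫⁻ ω, (R + R⁻¹ * (‖Y ω‖₊ : ENNReal) ^ 2) ∂b :=
            lintegral_mono fun ω => ennreal_le_add_inv_mul_sq _ hR0 hRt
        _ = R * b Set.univ + R⁻¹ * ∫⁻ ω, (‖Y ω‖₊ : ENNReal) ^ 2 ∂b := by
            rw [lintegral_add_left measurable_const, lintegral_const,
              lintegral_const_mul _ (hf.pow_const 2)]
        _ = R * e + R⁻¹ * ∫⁻ ω, (‖Y ω‖₊ : ENNReal) ^ 2 ∂b := by rw [hab]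
    have hAB : ∫⁻ p : Ω × Ω, edist (Y p.1) (Y p.2) ∂(a.prod b) ≤
        e * ((R * e + R⁻¹ * ∫⁻ ω, (‖Y ω‖₊ : ENNReal) ^ 2 ∂a) +
             (R * e + R⁻¹ * ∫⁻ ω, (‖Y ω‖₊ : ENNReal) ^ 2 ∂b)) := by
      calc ∫⁻ p : Ω × Ω, edist (Y p.1) (Y p.2) ∂(a.prod b)
          ≤ ∫⁻ p : Ω × Ω, ((‖Y p.1‖₊ : ENNReal) + (‖Y p.2‖₊ : ENNReal)) ∂(a.prod b) :=
            lintegral_mono fun p => edist_le_enorm_add_enorm _ _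
        _ = (∫⁻ p : Ω × Ω, (‖Y p.1‖₊ : ENNReal) ∂(a.prod b)) +
            ∫⁻ p : Ω × Ω, (‖Y p.2‖₊ : ENNReal) ∂(a.prod b) :=
            lintegral_add_left (hf.comp measurable_fst) _
        _ = e * (∫⁻ ω, (‖Y ω‖₊ : ENNReal) ∂a) + e * ∫⁻ ω, (‖Y ω‖₊ : ENNReal) ∂b := by
            have hc1 : ∫⁻ p : Ω × Ω, (‖Y p.1‖₊ : ENNReal) ∂(a.prod b)
                = (∫⁻ ω, (‖Y ω‖₊ : ENNReal) ∂a) * e := by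
              rw [lintegral_prod (fun p => ((‖Y p.1‖₊ : ENNReal))) (hf.comp measurable_fst).aemeasurable]
              simp [lintegral_const, lintegral_mul_const _ hf, hab]
            have hc2 : ∫⁻ p : Ω × Ω, (‖Y p.2‖₊ : ENNReal) ∂(a.prod b)
                = (∫⁻ ω, (‖Y ω‖₊ : ENNReal) ∂b) * e := by
              rw [lintegral_prod (fun p => ((‖Y p.2‖₊ : ENNReal))) (hf.comp measurable_snd).aemeasurable]
              simp [lintegral_const, he]
            rw [hc1, hc2]
            ring
        _ ≤ e * (R * e + R⁻¹ * ∫⁻ ω, (‖Y ω‖₊ : ENNReal) ^ 2 ∂a) +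
            e * (R * e + R⁻¹ * ∫⁻ ω, (‖Y ω‖₊ : ENNReal) ^ 2 ∂b) := by gcongr
        _ = e * ((R * e + R⁻¹ * ∫⁻ ω, (‖Y ω‖₊ : ENNReal) ^ 2 ∂a) +
             (R * e + R⁻¹ * ∫⁻ ω, (‖Y ω‖₊ : ENNReal) ^ 2 ∂b)) := by ring
    calc e⁻¹ * ∫⁻ p : Ω × Ω, edist (Y p.1) (Y p.2) ∂(a.prod b)
        ≤ e⁻¹ * (e * ((R * e + R⁻¹ * ∫⁻ ω, (‖Y ω‖₊ : ENNReal) ^ 2 ∂a) +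
             (R * e + R⁻¹ * ∫⁻ ω, (‖Y ω‖₊ : ENNReal) ^ 2 ∂b))) := mul_le_mul_right hAB _
      _ = (R * e + R⁻¹ * ∫⁻ ω, (‖Y ω‖₊ : ENNReal) ^ 2 ∂a) +
             (R * e + R⁻¹ * ∫⁻ ω, (‖Y ω‖₊ : ENNReal) ^ 2 ∂b) := by
          rw [← mul_assoc, ENNReal.inv_mul_cancel he0 het, one_mul]
      _ = 2 * (R * e) + R⁻¹ * ((∫⁻ ω, (‖Y ω‖₊ : ENNReal) ^ 2 ∂a) +
            ∫⁻ ω, (‖Y ω‖₊ : ENNReal) ^ 2 ∂b) := by ring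


open PaperFormal in
/-- quantitative TV–Wasserstein bound from Proposition 3.1.  For a jointly
measurable process `X` with finite `ℍ²`-norms under `P` and `P'`:
`∫₀ᵀ 𝒲₁(P∘X_t⁻¹, P'∘X_t⁻¹) dt ≤ (2T + ‖X‖²_{ℍ²(P)} + ‖X‖²_{ℍ²(P')})·‖P−P'‖_TV^{1/2}`. -/
theorem statement2
    {Ω : Type*} [MeasurableSpace Ω]
    {E : Type*} [NormedAddCommGroup E] [NormedSpace ℝ E] [CompleteSpace E]
    [TopologicalSpace.SeparableSpace E] [MeasurableSpace E] [BorelSpace E]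
    (T : ℝ) (hT : 0 < T)
    (P P' : Measure Ω) [IsProbabilityMeasure P] [IsProbabilityMeasure P']
    (X : ℝ → Ω → E) (hX : Measurable fun p : ℝ × Ω => X p.1 p.2)
    (hP : ∫⁻ ω, ∫⁻ t in Set.Icc (0 : ℝ) T, (‖X t ω‖₊ : ENNReal) ^ 2 ∂volume ∂P < ⊤)
    (hP' : ∫⁻ ω, ∫⁻ t in Set.Icc (0 : ℝ) T, (‖X t ω‖₊ : ENNReal) ^ 2 ∂volume ∂P' < ⊤) :
    ∫⁻ t in Set.Icc (0 : ℝ) T, W1 (P.map (X t)) (P'.map (X t)) ∂volume ≤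
      (ENNReal.ofReal (2 * T) +
        (∫⁻ ω, ∫⁻ t in Set.Icc (0 : ℝ) T, (‖X t ω‖₊ : ENNReal) ^ 2 ∂volume ∂P) +
        (∫⁻ ω, ∫⁻ t in Set.Icc (0 : ℝ) T, (‖X t ω‖₊ : ENNReal) ^ 2 ∂volume ∂P')) *
      (tvDist P P') ^ (1 / 2 : ℝ) := by
  haveI : SecondCountableTopology E := UniformSpace.secondCountable_of_separable E
  have hXt : ∀ t, Measurable (X t) := fun t => hX.comp measurable_prodMk_left
  obtain ⟨S, hSm, hS1, hS2⟩ := hahn_decomposition (μ := P) (ν := P')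
  have hres1 : P'.restrict S ≤ P.restrict S := by
    refine Measure.le_iff.2 fun A hA => ?_
    rw [Measure.restrict_apply hA, Measure.restrict_apply hA]
    exact hS1 _ (hA.inter hSm) Set.inter_subset_right
  have hres2 : P.restrict Sᶜ ≤ P'.restrict Sᶜ := by
    refine Measure.le_iff.2 fun A hA => ?_
    rw [Measure.restrict_apply hA, Measure.restrict_apply hA]
    exact hS2 _ (hA.inter hSm.compl) Set.inter_subset_right
  set lam : Measure Ω := P'.restrict S + P.restrict Sᶜ with hlam
  set a : Measure Ω := P.restrict S - P'.restrict S with hadef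
  set b : Measure Ω := P'.restrict Sᶜ - P.restrict Sᶜ with hbdef
  have haP : a ≤ P := Measure.sub_le.trans Measure.restrict_le_self
  have hbP' : b ≤ P' := Measure.sub_le.trans Measure.restrict_le_self
  haveI : IsFiniteMeasure a := isFiniteMeasure_of_le P haP
  haveI : IsFiniteMeasure b := isFiniteMeasure_of_le P' hbP'
  have hlama : lam + a = P := by
    rw [hlam, hadef]
    calc P'.restrict S + P.restrict Sᶜ + (P.restrict S - P'.restrict S)
        = (P.restrict S - P'.restrict S) + P'.restrict S + P.restrict Sᶜ := by
          rw [add_comm _ (P.restrict S - P'.restrict S), ← add_assoc]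
      _ = P.restrict S + P.restrict Sᶜ := by rw [Measure.sub_add_cancel_of_le hres1]
      _ = P := Measure.restrict_add_restrict_compl hSm
  have hlamb : lam + b = P' := by
    rw [hlam, hbdef]
    calc P'.restrict S + P.restrict Sᶜ + (P'.restrict Sᶜ - P.restrict Sᶜ)
        = (P'.restrict Sᶜ - P.restrict Sᶜ) + P.restrict Sᶜ + P'.restrict S := by
          rw [add_comm (P'.restrict S) (P.restrict Sᶜ),
            add_comm _ (P'.restrict Sᶜ - P.restrict Sᶜ), ← add_assoc]
      _ = P'.restrict Sᶜ + P'.restrict S := by rw [Measure.sub_add_cancel_of_le hres2]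
      _ = P' := by rw [add_comm]; exact Measure.restrict_add_restrict_compl hSm
  have hae : a Set.univ = P S - P' S := by
    rw [hadef, Measure.sub_apply MeasurableSet.univ hres1,
      Measure.restrict_apply_univ, Measure.restrict_apply_univ]
  have hbe : b Set.univ = a Set.univ := by
    rw [hbdef, Measure.sub_apply MeasurableSet.univ hres2,
      Measure.restrict_apply_univ, Measure.restrict_apply_univ, hae,
      prob_compl_eq_one_sub hSm, prob_compl_eq_one_sub hSm]
    exact AddLECancellable.tsub_tsub_tsub_cancel_left
      (ENNReal.cancel_of_ne (ENNReal.sub_ne_top ENNReal.one_ne_top)) prob_le_one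
  have hea : a Set.univ ≤ tvDist P P' := by
    rw [hae]
    exact le_iSup₂_of_le S hSm (le_max_left _ _)
  have hmeas2 : Measurable (fun p : ℝ × Ω => ((‖X p.1 p.2‖₊ : ENNReal)) ^ 2) :=
    hX.nnnorm.coe_nnreal_ennreal.pow_const 2
  have key : ∀ R : ENNReal, R ≠ 0 → R ≠ ⊤ →
      ∫⁻ t in Set.Icc (0:ℝ) T, W1 (P.map (X t)) (P'.map (X t)) ∂volume ≤
        2 * (R * a Set.univ) * ENNReal.ofReal T +
          R⁻¹ * ((∫⁻ ω, ∫⁻ t in Set.Icc (0:ℝ) T, ((‖X t ω‖₊ : ENNReal)) ^ 2 ∂volume ∂P) +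
                 (∫⁻ ω, ∫⁻ t in Set.Icc (0:ℝ) T, ((‖X t ω‖₊ : ENNReal)) ^ 2 ∂volume ∂P')) := by
    intro R hR0 hRt
    have step1 : ∫⁻ t in Set.Icc (0:ℝ) T, W1 (P.map (X t)) (P'.map (X t)) ∂volume ≤
        ∫⁻ t in Set.Icc (0:ℝ) T, (2 * (R * a Set.univ) +
          R⁻¹ * ((∫⁻ ω, ((‖X t ω‖₊ : ENNReal)) ^ 2 ∂a) +
            ∫⁻ ω, ((‖X t ω‖₊ : ENNReal)) ^ 2 ∂b)) ∂volume :=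
      lintegral_mono fun t =>
        pointwise_W1_bound P P' lam a b hlama hlamb hbe (X t) (hXt t) hR0 hRt
    refine step1.trans ?_
    have hga : Measurable fun t => ∫⁻ ω, ((‖X t ω‖₊ : ENNReal)) ^ 2 ∂a :=
      Measurable.lintegral_prod_right hmeas2
    have hgb : Measurable fun t => ∫⁻ ω, ((‖X t ω‖₊ : ENNReal)) ^ 2 ∂b :=
      Measurable.lintegral_prod_right hmeas2
    rw [lintegral_add_left measurable_const, lintegral_const,
      Measure.restrict_apply_univ, Real.volume_Icc, sub_zero,
      lintegral_const_mul (f := fun t => ∫⁻ ω, ((‖X t ω‖₊ : ENNReal)) ^ 2 ∂a + ∫⁻ ω, ((‖X t ω‖₊ : ENNReal)) ^ 2 ∂b) _ (hga.add hgb),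
      lintegral_add_left hga]
    have hswa : ∫⁻ t in Set.Icc (0:ℝ) T, ∫⁻ ω, ((‖X t ω‖₊ : ENNReal)) ^ 2 ∂a ∂volume
        ≤ ∫⁻ ω, ∫⁻ t in Set.Icc (0:ℝ) T, ((‖X t ω‖₊ : ENNReal)) ^ 2 ∂volume ∂P := by
      rw [lintegral_lintegral_swap hmeas2.aemeasurable]
      exact lintegral_mono' haP le_rfl
    have hswb : ∫⁻ t in Set.Icc (0:ℝ) T, ∫⁻ ω, ((‖X t ω‖₊ : ENNReal)) ^ 2 ∂b ∂volume
        ≤ ∫⁻ ω, ∫⁻ t in Set.Icc (0:ℝ) T, ((‖X t ω‖₊ : ENNReal)) ^ 2 ∂volume ∂P' := by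
      rw [lintegral_lintegral_swap hmeas2.aemeasurable]
      exact lintegral_mono' hbP' le_rfl
    gcongr
  by_cases htv : tvDist P P' = 0
  · have he0 : a Set.univ = 0 := le_antisymm (hea.trans htv.le) (by simp)
    have hC : ((∫⁻ ω, ∫⁻ t in Set.Icc (0:ℝ) T, ((‖X t ω‖₊ : ENNReal)) ^ 2 ∂volume ∂P) +
        (∫⁻ ω, ∫⁻ t in Set.Icc (0:ℝ) T, ((‖X t ω‖₊ : ENNReal)) ^ 2 ∂volume ∂P')) ≠ ⊤ :=
      (ENNReal.add_lt_top.2 ⟨hP, hP'⟩).ne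
    have hle : ∀ n : ℕ,
        ∫⁻ t in Set.Icc (0:ℝ) T, W1 (P.map (X t)) (P'.map (X t)) ∂volume ≤
        ((n : ENNReal) + 1)⁻¹ *
          ((∫⁻ ω, ∫⁻ t in Set.Icc (0:ℝ) T, ((‖X t ω‖₊ : ENNReal)) ^ 2 ∂volume ∂P) +
           (∫⁻ ω, ∫⁻ t in Set.Icc (0:ℝ) T, ((‖X t ω‖₊ : ENNReal)) ^ 2 ∂volume ∂P')) := by
      intro n
      have h := key ((n : ENNReal) + 1) (by simp)
        (by simp [ENNReal.add_eq_top, ENNReal.natCast_ne_top])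
      simpa [he0] using h
    have h1 : Tendsto (fun n : ℕ => ((n : ENNReal) + 1)⁻¹) atTop (𝓝 0) := by
      have h2 := ENNReal.tendsto_inv_nat_nhds_zero.comp (tendsto_add_atTop_nat 1)
      simpa [Function.comp_def, Nat.cast_add, Nat.cast_one] using h2
    have htend : Tendsto (fun n : ℕ => ((n : ENNReal) + 1)⁻¹ *
          ((∫⁻ ω, ∫⁻ t in Set.Icc (0:ℝ) T, ((‖X t ω‖₊ : ENNReal)) ^ 2 ∂volume ∂P) +
           (∫⁻ ω, ∫⁻ t in Set.Icc (0:ℝ) T, ((‖X t ω‖₊ : ENNReal)) ^ 2 ∂volume ∂P')))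
        atTop (𝓝 0) := by
      simpa using ENNReal.Tendsto.mul_const h1 (Or.inr hC)
    have hzero : ∫⁻ t in Set.Icc (0:ℝ) T, W1 (P.map (X t)) (P'.map (X t)) ∂volume ≤ 0 :=
      ge_of_tendsto' htend hle
    rw [htv, ENNReal.zero_rpow_of_pos (by norm_num), mul_zero]
    exact hzero
  · have htvt : tvDist P P' ≠ ⊤ := by
      refine ne_of_lt (lt_of_le_of_lt ?_ ENNReal.one_lt_top)
      exact iSup₂_le fun A hA =>
        max_le (le_trans tsub_le_self prob_le_one) (le_trans tsub_le_self prob_le_one)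
    set s := tvDist P P' ^ (1/2 : ℝ) with hs
    have hs0 : s ≠ 0 := by
      simp [hs, ENNReal.rpow_eq_zero_iff, htv, htvt]
    have hst : s ≠ ⊤ := by
      simp [hs, ENNReal.rpow_eq_top_iff, htv, htvt]
    have hss : s * s = tvDist P P' := by
      rw [hs, ← ENNReal.rpow_add _ _ htv htvt]
      norm_num
    have h1 := key s⁻¹ (ENNReal.inv_ne_zero.2 hst) (ENNReal.inv_ne_top.2 hs0)
    rw [inv_inv] at h1
    refine h1.trans ?_
    have h2 : s⁻¹ * a Set.univ ≤ s := by
      calc s⁻¹ * a Set.univ ≤ s⁻¹ * (s * s) := by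
            rw [hss]; exact mul_le_mul_right hea _
        _ = s := by rw [← mul_assoc, ENNReal.inv_mul_cancel hs0 hst, one_mul]
    calc 2 * (s⁻¹ * a Set.univ) * ENNReal.ofReal T +
          s * ((∫⁻ ω, ∫⁻ t in Set.Icc (0:ℝ) T, ((‖X t ω‖₊ : ENNReal)) ^ 2 ∂volume ∂P) +
               (∫⁻ ω, ∫⁻ t in Set.Icc (0:ℝ) T, ((‖X t ω‖₊ : ENNReal)) ^ 2 ∂volume ∂P'))
        ≤ 2 * s * ENNReal.ofReal T +
          s * ((∫⁻ ω, ∫⁻ t in Set.Icc (0:ℝ) T, ((‖X t ω‖₊ : ENNReal)) ^ 2 ∂volume ∂P) +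
               (∫⁻ ω, ∫⁻ t in Set.Icc (0:ℝ) T, ((‖X t ω‖₊ : ENNReal)) ^ 2 ∂volume ∂P')) := by
          gcongr
      _ = (ENNReal.ofReal (2 * T) +
          (∫⁻ ω, ∫⁻ t in Set.Icc (0:ℝ) T, ((‖X t ω‖₊ : ENNReal)) ^ 2 ∂volume ∂P) +
          (∫⁻ ω, ∫⁻ t in Set.Icc (0:ℝ) T, ((‖X t ω‖₊ : ENNReal)) ^ 2 ∂volume ∂P')) * s := by
          rw [ENNReal.ofReal_mul (by norm_num : (0:ℝ) ≤ 2),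
            show ENNReal.ofReal 2 = 2 by norm_num]
          ring
end
end

section
/- Let E be a separable Banach space, d ≥ 1, T > 0, I an index set, and for each i ∈ I let t ↦ q_t^i be a Borel map from [0,T] to 𝒫₁(E × ℝ^d) with marginals q_t^{i,x} on E and q_t^{i,z} on ℝ^d. Assume there exist δ₁, C₁ > 0 and a Borel probability measure 𝔮 on E with all moments finite such that q_t^{i,x} ≪ 𝔮 and ∫_E ( dq_t^{i,x}/d𝔮 )^{1+δ₁} d𝔮 ≤ C₁ for all i ∈ I and t ∈ [0,T], and there exist δ₂, C₂ > 0 with sup_{i∈I} ∫₀ᵀ ∫_{ℝ^d} |w|^{1+δ₂} q_t^{i,z}(dw) dt ≤ C₂. Then there exists a constant C > 0, depending only on T, δ₁, δ₂, C₁, C₂ and the moments of 𝔮, such that for all K > 0, sup_{i∈I} ∫₀ᵀ M₁(q_t^i) · 1_{\{M₁(q_t^i) > K\}} dt ≤ C · K^{-δ₂}. In particular, the family of integrable Young measures { δ_{q_t^i}(dq) dt }_{i∈I} is uniformly integrable. -/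
open MeasureTheory Filter Topology

noncomputable section

open PaperFormal
open scoped ENNReal NNReal

private lemma tail_aux {δ : ℝ} (hδ : 0 < δ) {lam : ℝ≥0∞} (hl0 : lam ≠ 0) (c : ℝ≥0∞)
    (hc : c ≠ ⊤) : c ≤ lam + c ^ (1 + δ) * lam ^ (-δ) := by
  rcases le_or_gt c lam with h | h
  · exact h.trans le_self_add
  · rcases eq_or_ne c 0 with rfl | hc0
    · exact zero_le
    have h1 : c = c ^ (1 + δ) * c ^ (-δ) := by
      rw [← ENNReal.rpow_add _ _ hc0 hc]; norm_num
    have h2 : c ^ (-δ) ≤ lam ^ (-δ) := by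
      rw [ENNReal.rpow_neg, ENNReal.rpow_neg]
      exact ENNReal.inv_le_inv.2 (ENNReal.rpow_le_rpow h.le hδ.le)
    calc c = c ^ (1 + δ) * c ^ (-δ) := h1
      _ ≤ c ^ (1 + δ) * lam ^ (-δ) := mul_le_mul_right h2 _
      _ ≤ lam + c ^ (1 + δ) * lam ^ (-δ) := le_add_self

open PaperFormal in
/-- uniform integrability estimate, Step 3 of the proof of Theorem 4.3.
Under the density bound on the `x`-marginals and the `(1+δ₂)`-moment bound on the
`z`-marginals, there is a constant `C > 0` with
`sup_i ∫₀ᵀ M₁(q_t^i)·1_{M₁(q_t^i)>K} dt ≤ C·K^{-δ₂}` for all `K > 0`; in particular the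
family of Dirac-type Young measures is uniformly integrable. -/
theorem statement10
    {E : Type*} [NormedAddCommGroup E] [NormedSpace ℝ E] [CompleteSpace E]
    [TopologicalSpace.SeparableSpace E] [MeasurableSpace E] [BorelSpace E]
    {I : Type*} (d : ℕ) (hd : 1 ≤ d) (T : ℝ) (hT : 0 < T)
    (q : I → ℝ → Measure (E × EuclideanSpace ℝ (Fin d)))
    (hmeas : ∀ i, Measurable (q i))
    (hP1 : ∀ i, ∀ t ∈ Set.Icc (0 : ℝ) T,
      q i t ∈ P1 (sumCost) ((0, 0) : E × EuclideanSpace ℝ (Fin d)))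
    (𝔮 : Measure E) [IsProbabilityMeasure 𝔮]
    (hmom : ∀ p : ℝ, 1 ≤ p → ∫⁻ x, (‖x‖₊ : ENNReal) ^ p ∂𝔮 < ⊤)
    (δ₁ C₁ : ℝ) (hδ₁ : 0 < δ₁) (hC₁ : 0 < C₁)
    (habs : ∀ i, ∀ t ∈ Set.Icc (0 : ℝ) T, (q i t).map Prod.fst ≪ 𝔮)
    (hdens : ∀ i, ∀ t ∈ Set.Icc (0 : ℝ) T,
      ∫⁻ x, (((q i t).map Prod.fst).rnDeriv 𝔮 x) ^ (1 + δ₁) ∂𝔮 ≤ ENNReal.ofReal C₁)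
    (δ₂ C₂ : ℝ) (hδ₂ : 0 < δ₂) (hC₂ : 0 < C₂)
    (hz : ∀ i, ∫⁻ t in Set.Icc (0 : ℝ) T,
      (∫⁻ w, (‖w‖₊ : ENNReal) ^ (1 + δ₂) ∂((q i t).map Prod.snd)) ∂volume ≤
        ENNReal.ofReal C₂) :
    ∃ C : ℝ, 0 < C ∧
      (∀ K : ℝ, 0 < K → ∀ i,
        ∫⁻ t in Set.Icc (0 : ℝ) T ∩
            {t | ENNReal.ofReal K <
              ∫⁻ u, sumCost ((0, 0) : E × EuclideanSpace ℝ (Fin d)) u ∂(q i t)},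
          (∫⁻ u, sumCost ((0, 0) : E × EuclideanSpace ℝ (Fin d)) u ∂(q i t)) ∂volume ≤
        ENNReal.ofReal (C * K ^ (-δ₂))) ∧
      Tendsto (fun K : ℝ => ⨆ i,
        ∫⁻ t in Set.Icc (0 : ℝ) T ∩
            {t | ENNReal.ofReal K <
              ∫⁻ u, sumCost ((0, 0) : E × EuclideanSpace ℝ (Fin d)) u ∂(q i t)},
          (∫⁻ u, sumCost ((0, 0) : E × EuclideanSpace ℝ (Fin d)) u ∂(q i t)) ∂volume)
        atTop (𝓝 0) := by
    classical
  have hprob : ∀ i, ∀ t ∈ Set.Icc (0:ℝ) T, IsProbabilityMeasure (q i t) :=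
    fun i t ht => (hP1 i t ht).1
  have hf1m : Measurable (fun u : E × EuclideanSpace ℝ (Fin d) => (‖u.1‖₊ : ℝ≥0∞)) :=
    (measurable_nnnorm.comp measurable_fst).coe_nnreal_ennreal
  have hf2m : Measurable (fun u : E × EuclideanSpace ℝ (Fin d) => (‖u.2‖₊ : ℝ≥0∞)) :=
    (measurable_nnnorm.comp measurable_snd).coe_nnreal_ennreal
  have hsum : ∀ u : E × EuclideanSpace ℝ (Fin d),
      sumCost ((0,0) : E × EuclideanSpace ℝ (Fin d)) u = (‖u.1‖₊ : ℝ≥0∞) + (‖u.2‖₊ : ℝ≥0∞) := by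
    intro u
    simp [sumCost, edist_comm, enorm_eq_nnnorm]
  have hsumm : Measurable (sumCost ((0,0) : E × EuclideanSpace ℝ (Fin d))) := by
    have heq : sumCost ((0,0) : E × EuclideanSpace ℝ (Fin d))
        = fun u => (‖u.1‖₊ : ℝ≥0∞) + (‖u.2‖₊ : ℝ≥0∞) := funext hsum
    rw [heq]; exact hf1m.add hf2m
  have hMmeas : ∀ i, Measurable (fun t =>
      ∫⁻ u, sumCost ((0,0) : E × EuclideanSpace ℝ (Fin d)) u ∂(q i t)) :=
    fun i => (Measure.measurable_lintegral hsumm).comp (hmeas i)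
  have hf2pm : Measurable (fun u : E × EuclideanSpace ℝ (Fin d) => (‖u.2‖₊ : ℝ≥0∞) ^ (1 + δ₂)) :=
    ENNReal.continuous_rpow_const.measurable.comp hf2m
  set g : I → ℝ → ℝ≥0∞ := fun i t => ∫⁻ u, (‖u.2‖₊ : ℝ≥0∞) ^ (1 + δ₂) ∂(q i t) with hg_def
  have hgmeas : ∀ i, Measurable (g i) :=
    fun i => (Measure.measurable_lintegral hf2pm).comp (hmeas i)
  have hzg : ∀ i, ∫⁻ t in Set.Icc (0:ℝ) T, g i t ∂volume ≤ ENNReal.ofReal C₂ := by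
    intro i
    refine le_trans (le_of_eq ?_) (hz i)
    refine lintegral_congr fun t => ?_
    have hmw : Measurable fun w : EuclideanSpace ℝ (Fin d) => ((‖w‖₊ : ℝ≥0∞)) ^ (1 + δ₂) :=
      ENNReal.continuous_rpow_const.measurable.comp measurable_nnnorm.coe_nnreal_ennreal
    exact (lintegral_map hmw measurable_snd).symm
  -- x-part via Hölder
  have h1δ : (0:ℝ) < 1 + δ₁ := by linarith
  have hpq : Real.HolderConjugate (1 + δ₁) ((1 + δ₁) / δ₁) := by
    refine Real.holderConjugate_iff.2 ⟨by linarith, ?_⟩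
    have h2 : δ₁ ≠ 0 := ne_of_gt hδ₁
    have h3 : (1:ℝ) + δ₁ ≠ 0 := ne_of_gt h1δ
    field_simp
  have hpq1 : 1 ≤ (1 + δ₁) / δ₁ := by
    rw [le_div_iff₀ hδ₁]; linarith
  have hMx := hmom ((1 + δ₁) / δ₁) hpq1
  set A : ℝ≥0∞ := (ENNReal.ofReal C₁) ^ (1/(1 + δ₁)) *
      (∫⁻ x, (‖x‖₊ : ℝ≥0∞) ^ ((1 + δ₁) / δ₁) ∂𝔮) ^ (1/((1 + δ₁) / δ₁)) with hA_def
  have hAtop : A ≠ ⊤ := by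
    apply ENNReal.mul_ne_top
    · exact (ENNReal.rpow_lt_top_of_nonneg (one_div_nonneg.2 h1δ.le) ENNReal.ofReal_ne_top).ne
    · exact (ENNReal.rpow_lt_top_of_nonneg
        (one_div_nonneg.2 (le_trans zero_le_one hpq1)) hMx.ne).ne
  have hnnE : Measurable fun x : E => (‖x‖₊ : ℝ≥0∞) := measurable_nnnorm.coe_nnreal_ennreal
  have hx : ∀ i, ∀ t ∈ Set.Icc (0:ℝ) T, ∫⁻ u, ((‖u.1‖₊ : ℝ≥0∞)) ∂(q i t) ≤ A := by
    intro i t ht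
    haveI := hprob i t ht
    haveI : IsProbabilityMeasure ((q i t).map Prod.fst) :=
      Measure.isProbabilityMeasure_map measurable_fst.aemeasurable
    have h1 : ∫⁻ u, ((‖u.1‖₊ : ℝ≥0∞)) ∂(q i t)
        = ∫⁻ x, (‖x‖₊ : ℝ≥0∞) ∂((q i t).map Prod.fst) :=
      (lintegral_map hnnE measurable_fst).symm
    have h2 : ∫⁻ x, (‖x‖₊ : ℝ≥0∞) ∂((q i t).map Prod.fst)
        = ∫⁻ x, ((q i t).map Prod.fst).rnDeriv 𝔮 x * (‖x‖₊ : ℝ≥0∞) ∂𝔮 :=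
      (lintegral_rnDeriv_mul (habs i t ht) hnnE.aemeasurable).symm
    have h3 := ENNReal.lintegral_mul_le_Lp_mul_Lq 𝔮 hpq
      (Measure.measurable_rnDeriv ((q i t).map Prod.fst) 𝔮).aemeasurable hnnE.aemeasurable
    calc ∫⁻ u, ((‖u.1‖₊ : ℝ≥0∞)) ∂(q i t)
        = ∫⁻ x, ((q i t).map Prod.fst).rnDeriv 𝔮 x * (‖x‖₊ : ℝ≥0∞) ∂𝔮 := by rw [h1, h2]
      _ ≤ (∫⁻ x, (((q i t).map Prod.fst).rnDeriv 𝔮 x) ^ (1 + δ₁) ∂𝔮) ^ (1/(1 + δ₁)) *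
          (∫⁻ x, ((‖x‖₊ : ℝ≥0∞)) ^ ((1 + δ₁) / δ₁) ∂𝔮) ^ (1/((1 + δ₁) / δ₁)) := h3
      _ ≤ A := by
          rw [hA_def]
          exact mul_le_mul_left
            (ENNReal.rpow_le_rpow (hdens i t ht) (one_div_nonneg.2 h1δ.le)) _
  -- z-part
  have hmz : ∀ i, ∀ t ∈ Set.Icc (0:ℝ) T, ∀ lam : ℝ≥0∞, lam ≠ 0 →
      ∫⁻ u, ((‖u.2‖₊ : ℝ≥0∞)) ∂(q i t) ≤ lam + g i t * lam ^ (-δ₂) := by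
    intro i t ht lam hlam
    haveI := hprob i t ht
    calc ∫⁻ u, ((‖u.2‖₊ : ℝ≥0∞)) ∂(q i t)
        ≤ ∫⁻ u, (lam + (‖u.2‖₊ : ℝ≥0∞) ^ (1 + δ₂) * lam ^ (-δ₂)) ∂(q i t) :=
          lintegral_mono fun u => tail_aux hδ₂ hlam _ ENNReal.coe_ne_top
      _ = lam + g i t * lam ^ (-δ₂) := by
          rw [lintegral_add_left measurable_const, lintegral_const, measure_univ, mul_one,
            lintegral_mul_const _ hf2pm]
  have hMbound : ∀ i, ∀ t ∈ Set.Icc (0:ℝ) T, ∀ lam : ℝ≥0∞, lam ≠ 0 →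
      (∫⁻ u, sumCost ((0,0) : E × EuclideanSpace ℝ (Fin d)) u ∂(q i t))
        ≤ A + (lam + g i t * lam ^ (-δ₂)) := by
    intro i t ht lam hlam
    have hsplit : (∫⁻ u, sumCost ((0,0) : E × EuclideanSpace ℝ (Fin d)) u ∂(q i t))
        = ∫⁻ u, ((‖u.1‖₊ : ℝ≥0∞)) ∂(q i t) + ∫⁻ u, ((‖u.2‖₊ : ℝ≥0∞)) ∂(q i t) := by
      rw [← lintegral_add_left hf1m]
      exact lintegral_congr fun u => hsum u
    rw [hsplit]
    exact add_le_add (hx i t ht) (hmz i t ht lam hlam)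
  -- constants
  have hA0 : (0:ℝ) ≤ A.toReal := ENNReal.toReal_nonneg
  set B : ℝ := (A.toReal + 1) * T + C₂ with hB_def
  have hBpos : 0 < B := by nlinarith
  set K₀ : ℝ := 4 * (A.toReal + 1) with hK0_def
  have hK0pos : 0 < K₀ := by nlinarith
  set C : ℝ := max (B * K₀ ^ δ₂) (2 * C₂ * 4 ^ δ₂) + 1 with hC_def
  have hCpos : 0 < C := by
    have h1 : 0 ≤ B * K₀ ^ δ₂ := mul_nonneg hBpos.le (Real.rpow_nonneg hK0pos.le _)
    have h2 := le_max_left (B * K₀ ^ δ₂) (2 * C₂ * 4 ^ δ₂)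
    rw [hC_def]; linarith
  have hA1 : A + 1 ≤ ENNReal.ofReal (A.toReal + 1) := by
    rw [ENNReal.ofReal_add hA0 zero_le_one, ENNReal.ofReal_toReal hAtop, ENNReal.ofReal_one]
  have hIcc : ∀ i, ∫⁻ t in Set.Icc (0:ℝ) T,
      (∫⁻ u, sumCost ((0,0) : E × EuclideanSpace ℝ (Fin d)) u ∂(q i t)) ∂volume
      ≤ ENNReal.ofReal B := by
    intro i
    have h1 : ∀ t ∈ Set.Icc (0:ℝ) T,
        (∫⁻ u, sumCost ((0,0) : E × EuclideanSpace ℝ (Fin d)) u ∂(q i t)) ≤ (A + 1) + g i t := by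
      intro t ht
      calc (∫⁻ u, sumCost ((0,0) : E × EuclideanSpace ℝ (Fin d)) u ∂(q i t))
          ≤ A + ((1:ℝ≥0∞) + g i t * (1:ℝ≥0∞) ^ (-δ₂)) := hMbound i t ht 1 one_ne_zero
        _ = (A + 1) + g i t := by rw [ENNReal.one_rpow, mul_one, ← add_assoc]
    calc ∫⁻ t in Set.Icc (0:ℝ) T,
        (∫⁻ u, sumCost ((0,0) : E × EuclideanSpace ℝ (Fin d)) u ∂(q i t)) ∂volume
        ≤ ∫⁻ t in Set.Icc (0:ℝ) T, ((A + 1) + g i t) ∂volume :=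
          setLIntegral_mono' measurableSet_Icc h1
      _ = (A + 1) * volume (Set.Icc (0:ℝ) T) + ∫⁻ t in Set.Icc (0:ℝ) T, g i t ∂volume := by
          rw [lintegral_add_left measurable_const, setLIntegral_const]
      _ ≤ ENNReal.ofReal (A.toReal + 1) * ENNReal.ofReal T + ENNReal.ofReal C₂ := by
          refine add_le_add (mul_le_mul' hA1 ?_) (hzg i)
          rw [Real.volume_Icc, sub_zero]
      _ = ENNReal.ofReal B := by
          rw [← ENNReal.ofReal_mul (by linarith), ← ENNReal.ofReal_add (by nlinarith) hC₂.le,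
            hB_def]
  -- the key estimate
  have key : ∀ K : ℝ, 0 < K → ∀ i,
      ∫⁻ t in Set.Icc (0 : ℝ) T ∩
          {t | ENNReal.ofReal K <
            ∫⁻ u, sumCost ((0, 0) : E × EuclideanSpace ℝ (Fin d)) u ∂(q i t)},
        (∫⁻ u, sumCost ((0, 0) : E × EuclideanSpace ℝ (Fin d)) u ∂(q i t)) ∂volume ≤
      ENNReal.ofReal (C * K ^ (-δ₂)) := by
    intro K hK i
    set S := Set.Icc (0 : ℝ) T ∩
        {t | ENNReal.ofReal K <
          ∫⁻ u, sumCost ((0, 0) : E × EuclideanSpace ℝ (Fin d)) u ∂(q i t)} with hS_def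
    have hSsub : S ⊆ Set.Icc (0:ℝ) T := Set.inter_subset_left
    have hSmeas : MeasurableSet S :=
      measurableSet_Icc.inter (measurableSet_lt measurable_const (hMmeas i))
    have hKrpos : 0 < K ^ (-δ₂) := Real.rpow_pos_of_pos hK _
    rcases le_or_gt K K₀ with hKle | hKgt
    · refine le_trans (le_trans (lintegral_mono_set hSsub) (hIcc i))
        (ENNReal.ofReal_le_ofReal ?_)
      have h2 : K₀ ^ (-δ₂) ≤ K ^ (-δ₂) :=
        Real.rpow_le_rpow_of_nonpos hK hKle (by linarith)
      have h3 : B * K₀ ^ δ₂ ≤ C := by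
        have := le_max_left (B * K₀ ^ δ₂) (2 * C₂ * 4 ^ δ₂)
        rw [hC_def]; linarith
      have h4 : K₀ ^ δ₂ * K₀ ^ (-δ₂) = 1 := by
        rw [← Real.rpow_add hK0pos]; norm_num
      calc B = (B * K₀ ^ δ₂) * K₀ ^ (-δ₂) := by rw [mul_assoc, h4, mul_one]
        _ ≤ C * K ^ (-δ₂) :=
            mul_le_mul h3 h2 (Real.rpow_nonneg hK0pos.le _) (by linarith)
    · set lam : ℝ≥0∞ := ENNReal.ofReal (K/4) with hlam_def
      have hK4 : (0:ℝ) < K/4 := by linarith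
      have hlam0 : lam ≠ 0 := by
        rw [hlam_def, Ne, ENNReal.ofReal_eq_zero, not_le]; exact hK4
      have hlamtop : lam ≠ ⊤ := ENNReal.ofReal_ne_top
      have hAlam : A ≤ lam := by
        rw [hlam_def, ← ENNReal.ofReal_toReal hAtop]
        refine ENNReal.ofReal_le_ofReal ?_
        rw [hK0_def] at hKgt; linarith
      have hKlam : ENNReal.ofReal K = 4 * lam := by
        rw [hlam_def, ← ENNReal.ofReal_ofNat 4, ← ENNReal.ofReal_mul (by norm_num)]
        congr 1; ring
      have hglow : ∀ t ∈ S, 2 * lam * lam ^ δ₂ ≤ g i t := by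
        intro t ht
        have hlt : ENNReal.ofReal K < A + (lam + g i t * lam ^ (-δ₂)) :=
          lt_of_lt_of_le ht.2 (hMbound i t ht.1 lam hlam0)
        have h2 : 2 * lam + 2 * lam < 2 * lam + g i t * lam ^ (-δ₂) := by
          calc 2 * lam + 2 * lam = 4 * lam := by ring
            _ < A + (lam + g i t * lam ^ (-δ₂)) := by rw [← hKlam]; exact hlt
            _ ≤ lam + (lam + g i t * lam ^ (-δ₂)) := add_le_add_left hAlam _
            _ = 2 * lam + g i t * lam ^ (-δ₂) := by ring
        have h3 : 2 * lam ≤ g i t * lam ^ (-δ₂) :=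
          le_of_lt ((ENNReal.add_lt_add_iff_left
            (ENNReal.mul_ne_top (by norm_num) hlamtop)).1 h2)
        calc 2 * lam * lam ^ δ₂ ≤ (g i t * lam ^ (-δ₂)) * lam ^ δ₂ := mul_le_mul_left h3 _
          _ = g i t := by
              rw [mul_assoc, ← ENNReal.rpow_add _ _ hlam0 hlamtop, neg_add_cancel,
                ENNReal.rpow_zero, mul_one]
      have hcheb : 2 * lam * lam ^ δ₂ * volume S ≤ ENNReal.ofReal C₂ := by
        calc 2 * lam * lam ^ δ₂ * volume S
            = ∫⁻ _ in S, 2 * lam * lam ^ δ₂ ∂volume := (setLIntegral_const _ _).symm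
          _ ≤ ∫⁻ t in S, g i t ∂volume := setLIntegral_mono' hSmeas hglow
          _ ≤ ∫⁻ t in Set.Icc (0:ℝ) T, g i t ∂volume := lintegral_mono_set hSsub
          _ ≤ ENNReal.ofReal C₂ := hzg i
      have h5 : lam ^ δ₂ * lam ^ (-δ₂) = 1 := by
        rw [← ENNReal.rpow_add _ _ hlam0 hlamtop, add_neg_cancel, ENNReal.rpow_zero]
      have hvolS : 2 * lam * volume S ≤ ENNReal.ofReal C₂ * lam ^ (-δ₂) := by
        calc 2 * lam * volume S = (2 * lam * lam ^ δ₂ * volume S) * lam ^ (-δ₂) := by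
              rw [show (2 * lam * lam ^ δ₂ * volume S) * lam ^ (-δ₂)
                  = (2 * lam * volume S) * (lam ^ δ₂ * lam ^ (-δ₂)) from by ring, h5, mul_one]
          _ ≤ ENNReal.ofReal C₂ * lam ^ (-δ₂) := mul_le_mul_left hcheb _
      have hmain : ∫⁻ t in S,
          (∫⁻ u, sumCost ((0,0) : E × EuclideanSpace ℝ (Fin d)) u ∂(q i t)) ∂volume
          ≤ 2 * (ENNReal.ofReal C₂ * lam ^ (-δ₂)) := by
        calc ∫⁻ t in S,
            (∫⁻ u, sumCost ((0,0) : E × EuclideanSpace ℝ (Fin d)) u ∂(q i t)) ∂volume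
            ≤ ∫⁻ t in S, ((A + lam) + g i t * lam ^ (-δ₂)) ∂volume := by
              refine setLIntegral_mono' hSmeas fun t ht => ?_
              calc (∫⁻ u, sumCost ((0,0) : E × EuclideanSpace ℝ (Fin d)) u ∂(q i t))
                  ≤ A + (lam + g i t * lam ^ (-δ₂)) := hMbound i t ht.1 lam hlam0
                _ = (A + lam) + g i t * lam ^ (-δ₂) := by rw [← add_assoc]
          _ = (A + lam) * volume S + (∫⁻ t in S, g i t ∂volume) * lam ^ (-δ₂) := by
              rw [lintegral_add_left measurable_const, setLIntegral_const,
                lintegral_mul_const _ (hgmeas i)]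
          _ ≤ (lam + lam) * volume S + (ENNReal.ofReal C₂) * lam ^ (-δ₂) :=
              add_le_add (mul_le_mul_left (add_le_add_left hAlam _) _)
                (mul_le_mul_left (le_trans (lintegral_mono_set hSsub) (hzg i)) _)
          _ = 2 * lam * volume S + ENNReal.ofReal C₂ * lam ^ (-δ₂) := by rw [two_mul]
          _ ≤ ENNReal.ofReal C₂ * lam ^ (-δ₂) + ENNReal.ofReal C₂ * lam ^ (-δ₂) :=
              add_le_add_left hvolS _
          _ = 2 * (ENNReal.ofReal C₂ * lam ^ (-δ₂)) := (two_mul _).symm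
      refine hmain.trans ?_
      have hlamr : lam ^ (-δ₂) = ENNReal.ofReal ((K/4) ^ (-δ₂)) := by
        rw [hlam_def, ENNReal.ofReal_rpow_of_pos hK4]
      rw [hlamr, ← ENNReal.ofReal_mul hC₂.le, ← ENNReal.ofReal_ofNat 2,
        ← ENNReal.ofReal_mul (by norm_num)]
      refine ENNReal.ofReal_le_ofReal ?_
      have h6 : (K/4) ^ (-δ₂) = K ^ (-δ₂) * 4 ^ δ₂ := by
        rw [Real.div_rpow hK.le (by norm_num), Real.rpow_neg (by norm_num : (0:ℝ) ≤ 4),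
          div_eq_mul_inv, inv_inv]
      rw [h6]
      have h7 : 2 * C₂ * 4 ^ δ₂ ≤ C := by
        have := le_max_right (B * K₀ ^ δ₂) (2 * C₂ * 4 ^ δ₂)
        rw [hC_def]; linarith
      calc 2 * (C₂ * (K ^ (-δ₂) * 4 ^ δ₂)) = (2 * C₂ * 4 ^ δ₂) * K ^ (-δ₂) := by ring
        _ ≤ C * K ^ (-δ₂) := mul_le_mul_of_nonneg_right h7 hKrpos.le
  refine ⟨C, hCpos, key, ?_⟩
  have hupper : Tendsto (fun K : ℝ => ENNReal.ofReal (C * K ^ (-δ₂))) atTop (𝓝 0) := by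
    have h1 : Tendsto (fun K : ℝ => C * K ^ (-δ₂)) atTop (𝓝 (C * 0)) :=
      (tendsto_rpow_neg_atTop hδ₂).const_mul C
    rw [mul_zero] at h1
    simpa using ENNReal.tendsto_ofReal h1
  refine tendsto_of_tendsto_of_tendsto_of_le_of_le' tendsto_const_nhds hupper
    (Eventually.of_forall fun K => zero_le) ?_
  filter_upwards [eventually_gt_atTop (0:ℝ)] with K hK
  exact iSup_le fun i => key K hK i
end
end
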